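/- Let X be a metric space with asdim(X) = ∞ and let k ∈ ℕ. Then trasdim(X) ≤ ω + k if and only if for every n ∈ ℕ there exists m(n) ∈ ℕ such that for every d > 0 there are uniformly bounded families 𝒰_{−k}, 𝒰_{−k+1}, …, 𝒰_{m(n)} of subsets of X with 𝒰_i n-disjoint for −k ≤ i ≤ 0, 𝒰_j d-disjoint for 1 ≤ j ≤ m(n), and ⋃_{i=−k}^{m(n)} 𝒰_i covering X, where moreover m(n) → ∞ as n → ∞. -/

import Mathlib

open Metric Set Function

namespace APC

variable {X Y : Type*}

/-- A family `𝒰` of subsets of a metric space is `r`-disjoint if any two distinct members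
are at distance at least `r`. -/
def RDisjoint [MetricSpace X] (r : ℝ) (𝒰 : Set (Set X)) : Prop :=
  ∀ U ∈ 𝒰, ∀ V ∈ 𝒰, U ≠ V → ∀ x ∈ U, ∀ y ∈ V, r ≤ dist x y

/-- A family `𝒰` is `R`-bounded if every member has diameter at most `R`. -/
def RBounded [MetricSpace X] (R : ℝ) (𝒰 : Set (Set X)) : Prop :=
  ∀ U ∈ 𝒰, ∀ x ∈ U, ∀ y ∈ U, dist x y ≤ R

/-- A family is uniformly bounded if it is `R`-bounded for some `R > 0`. -/
def UnifBounded [MetricSpace X] (𝒰 : Set (Set X)) : Prop :=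
  ∃ R : ℝ, 0 < R ∧ RBounded R 𝒰

/-- `asdim X ≤ n`. -/
def AsdimLE (X : Type*) [MetricSpace X] (n : ℕ) : Prop :=
  ∀ r : ℝ, 0 < r → ∃ 𝒰 : Fin (n + 1) → Set (Set X),
    (∀ i, UnifBounded (𝒰 i)) ∧ (∀ i, RDisjoint r (𝒰 i)) ∧ (⋃ i, ⋃₀ 𝒰 i) = Set.univ

/-- `X` has finite asymptotic dimension. -/
def HasFiniteAsdim (X : Type*) [MetricSpace X] : Prop := ∃ n : ℕ, AsdimLE X n

/-- Asymptotic property C. -/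
def HasAPC (X : Type*) [MetricSpace X] : Prop :=
  ∀ R : ℕ → ℝ, (∀ i, 0 < R i) → StrictMono R →
    ∃ n : ℕ, ∃ 𝒰 : Fin (n + 1) → Set (Set X),
      (∀ i, UnifBounded (𝒰 i)) ∧ (∀ i : Fin (n + 1), RDisjoint (R i) (𝒰 i)) ∧
      (⋃ i, ⋃₀ 𝒰 i) = Set.univ

/-- `M^a`, the derivative of a collection of finite nonempty subsets of `ℕ`. -/
def deriv (M : Set (Finset ℕ)) (a : ℕ) : Set (Finset ℕ) :=
  {τ | τ.Nonempty ∧ a ∉ τ ∧ insert a τ ∈ M}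

/-- `OrdLE α M` means `Ord M ≤ α` in the sense of Radul: either `M = ∅`
(so that `Ord M = 0`), or `Ord M^a < α` for every `a : ℕ`.  Defined by
well-founded recursion on the ordinal `α`. -/
def OrdLE : Ordinal.{0} → Set (Finset ℕ) → Prop :=
  Ordinal.lt_wf.fix (C := fun _ => Set (Finset ℕ) → Prop)
    (fun α IH M => M = ∅ ∨ ∀ a : ℕ, ∃ β : Ordinal.{0}, ∃ hβ : β < α, IH β hβ (deriv M a))

/-- The collection `A(X,d)` of finite nonempty subsets `σ ⊆ ℕ` such that there is no
covering of `X` by uniformly bounded families `𝒰ᵢ` (`i ∈ σ`), each `i`-disjoint. -/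
def AClass (X : Type*) [MetricSpace X] : Set (Finset ℕ) :=
  {σ | σ.Nonempty ∧ ¬ ∃ 𝒰 : ℕ → Set (Set X),
      (∀ i ∈ σ, UnifBounded (𝒰 i)) ∧ (∀ i ∈ σ, RDisjoint (i : ℝ) (𝒰 i)) ∧
      (⋃ i ∈ σ, ⋃₀ 𝒰 i) = Set.univ}

/-- `trasdim X ≤ α`. -/
def TrasdimLE (X : Type*) [MetricSpace X] (α : Ordinal.{0}) : Prop :=
  OrdLE α (AClass X)

/-- The `(m,n)`-DTUT property: disjointness of the `(m,n)`-tiling through uniform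
translation. -/
def DTUT (X : Type*) [MetricSpace X] (m n : ℕ) : Prop :=
  ∃ F : Fin m → ℕ,
    ∀ h : ℕ+ → ℕ+, ∀ k : Fin (m + 1) → ℕ+, StrictMono k →
      ∃ C : (Fin m → ℕ+) → Fin (n + 1) → Set (Set X),
      ∃ D : (Fin m → ℕ+) → (i : Fin m) → Fin (F i + 1) → Set (Set X),
        ∀ l : Fin m → ℕ+, (∀ r : Fin m, l r ≤ h (k r.succ)) →
          ((∀ j, UnifBounded (C l j)) ∧
           (∀ i s, UnifBounded (D l i s)) ∧
           (∀ j, RDisjoint ((k 0 : ℕ) : ℝ) (C l j)) ∧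
           (∀ (i : Fin m) (s : Fin (F i + 1)), RDisjoint ((k i.succ : ℕ) : ℝ) (D l i s)) ∧
           ((⋃ j, ⋃₀ C l j) ∪ (⋃ i, ⋃ s, ⋃₀ D l i s) = Set.univ)) ∧
          (∀ (i : Fin m) (s : Fin (F i + 1)),
            (∀ t : ℕ+, t ≤ h (k i.succ) →
              (⋃₀ D (Function.update l i t) i s).Nonempty) ∧
            (∀ t t' : ℕ+, t ≤ h (k i.succ) → t' ≤ h (k i.succ) → t ≠ t' →
              Disjoint (⋃₀ D (Function.update l i t) i s)
                (⋃₀ D (Function.update l i t') i s)) ∧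
            RDisjoint ((k i.succ : ℕ) : ℝ)
              (⋃ t ∈ {t : ℕ+ | t ≤ h (k i.succ)}, D (Function.update l i t) i s))

/-- The word length of `g` with respect to the symmetrized generating set `S ∪ S⁻¹`. -/
noncomputable def wordLength {G : Type*} [Group G] (S : Set G) (g : G) : ℕ :=
  sInf {n : ℕ | ∃ L : List G, (∀ x ∈ L, x ∈ S ∨ x⁻¹ ∈ S) ∧ L.prod = g ∧ L.length = n}

/-- A group is FC if every conjugacy class is finite. -/
def IsFCGroup (G : Type*) [Group G] : Prop :=
  ∀ x : G, Set.Finite {y : G | ∃ g : G, g * x * g⁻¹ = y}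

/-- A metric on a countable discrete space is proper if every ball is finite. -/
def ProperMet (X : Type*) [MetricSpace X] : Prop :=
  ∀ (x : X) (R : ℝ), (Metric.closedBall x R).Finite

/-- Left invariance of a metric on a group. -/
def LeftInvariant (G : Type*) [Group G] [MetricSpace G] : Prop :=
  ∀ g x y : G, dist (g * x) (g * y) = dist x y

/-- Bornologous maps. -/
def Bornologous [MetricSpace X] [MetricSpace Y] (f : X → Y) : Prop :=
  ∀ R : ℝ, 0 < R → ∃ P : ℝ, 0 < P ∧ ∀ x y : X, dist x y < R → dist (f x) (f y) < P

/-- Coarse embeddings. -/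
def CoarseEmbedding [MetricSpace X] [MetricSpace Y] (f : X → Y) : Prop :=
  ∃ ρminus ρplus : ℝ → ℝ, Monotone ρminus ∧ Monotone ρplus ∧
    Filter.Tendsto ρminus Filter.atTop Filter.atTop ∧
    (∀ x y : X, ρminus (dist x y) ≤ dist (f x) (f y) ∧ dist (f x) (f y) ≤ ρplus (dist x y))

/-- Coarse equivalences: coarse embeddings with coarsely dense image. -/
def CoarseEquiv [MetricSpace X] [MetricSpace Y] (f : X → Y) : Prop :=
  CoarseEmbedding f ∧ ∃ C : ℝ, 0 < C ∧ ∀ y : Y, ∃ x : X, dist y (f x) ≤ C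

end APC

open APC Set

namespace TrasdimAux
open APC

lemma deriv_empty (a : ℕ) : APC.deriv (∅ : Set (Finset ℕ)) a = ∅ := by
  ext τ; simp [APC.deriv]

lemma ordLE_unfold (α : Ordinal.{0}) (M : Set (Finset ℕ)) :
    OrdLE α M ↔ (M = ∅ ∨ ∀ a : ℕ, ∃ β : Ordinal.{0}, β < α ∧ OrdLE β (APC.deriv M a)) := by
  unfold OrdLE
  rw [WellFounded.fix_eq]
  simp only [exists_prop]

lemma ordLE_empty (α : Ordinal.{0}) : OrdLE α (∅ : Set (Finset ℕ)) :=
  (ordLE_unfold α ∅).2 (Or.inl rfl)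

lemma ordLE_mono {α β : Ordinal.{0}} (h : α ≤ β) {M : Set (Finset ℕ)}
    (hM : OrdLE α M) : OrdLE β M := by
  rcases (ordLE_unfold α M).1 hM with h1 | h1
  · exact (ordLE_unfold β M).2 (Or.inl h1)
  · refine (ordLE_unfold β M).2 (Or.inr fun a => ?_)
    obtain ⟨γ, hγ, hg⟩ := h1 a
    exact ⟨γ, hγ.trans_le h, hg⟩

lemma ordLE_nat_iff : ∀ (b : ℕ) (M : Set (Finset ℕ)), (∀ σ ∈ M, σ.Nonempty) →
    (OrdLE (b : Ordinal.{0}) M ↔ ∀ σ ∈ M, σ.card ≤ b) := by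
  intro b
  induction b with
  | zero =>
    intro M hM
    rw [ordLE_unfold]
    constructor
    · rintro (rfl | h)
      · simp
      · obtain ⟨β, hβ, -⟩ := h 0
        simp only [Nat.cast_zero] at hβ
        exact absurd hβ not_lt_zero
    · intro h
      left
      refine Set.eq_empty_iff_forall_notMem.2 fun σ hσ => ?_
      have h1 := h σ hσ
      have h2 := (hM σ hσ).card_pos
      omega
  | succ b ih =>
    intro M hM
    have hstep : OrdLE ((b + 1 : ℕ) : Ordinal.{0}) M ↔
        ∀ a, OrdLE (b : Ordinal.{0}) (APC.deriv M a) := by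
      rw [ordLE_unfold]
      constructor
      · rintro (rfl | h) a
        · rw [deriv_empty]; exact ordLE_empty _
        · obtain ⟨β, hβ, hg⟩ := h a
          rw [Nat.cast_succ, Ordinal.add_one_eq_succ, Order.lt_succ_iff] at hβ
          exact ordLE_mono hβ hg
      · intro h
        refine Or.inr fun a => ⟨b, ?_, h a⟩
        rw [Nat.cast_succ, Ordinal.add_one_eq_succ]
        exact Order.lt_succ _
    rw [hstep]
    constructor
    · intro h σ hσ
      obtain ⟨a, ha⟩ := hM σ hσ
      have hd := ih (APC.deriv M a) (fun τ hτ => hτ.1)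
      have hce : (σ.erase a).card = σ.card - 1 := Finset.card_erase_of_mem ha
      have hpos := (hM σ hσ).card_pos
      by_cases he : σ.erase a = ∅
      · rw [he, Finset.card_empty] at hce
        omega
      · have hmem : σ.erase a ∈ APC.deriv M a :=
          ⟨Finset.nonempty_of_ne_empty he, Finset.notMem_erase a σ,
            by rwa [Finset.insert_erase ha]⟩
        have := hd.1 (h a) _ hmem
        omega
    · intro h a
      refine (ih _ (fun τ hτ => hτ.1)).2 fun τ hτ => ?_
      have h1 := h _ hτ.2.2
      have h2 : (insert a τ).card = τ.card + 1 := Finset.card_insert_of_notMem hτ.2.1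
      omega

/-- Iterated derivative along a list. -/
def derivs (M : Set (Finset ℕ)) : List ℕ → Set (Finset ℕ)
  | [] => M
  | a :: l => derivs (APC.deriv M a) l

lemma derivs_nil (M : Set (Finset ℕ)) : derivs M [] = M := rfl

lemma derivs_cons (M : Set (Finset ℕ)) (a : ℕ) (l : List ℕ) :
    derivs M (a :: l) = derivs (APC.deriv M a) l := rfl

lemma ordLE_omega_succ (k : ℕ) (M : Set (Finset ℕ)) :
    OrdLE (Ordinal.omega0 + ((k + 1 : ℕ) : Ordinal.{0})) M ↔
      ∀ a, OrdLE (Ordinal.omega0 + (k : Ordinal.{0})) (APC.deriv M a) := by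
  have hsucc : Ordinal.omega0 + ((k + 1 : ℕ) : Ordinal.{0})
      = Order.succ (Ordinal.omega0 + (k : Ordinal.{0})) := by
    rw [Nat.cast_succ, ← add_assoc, Ordinal.add_one_eq_succ]
  rw [ordLE_unfold, hsucc]
  constructor
  · rintro (rfl | h) a
    · rw [deriv_empty]; exact ordLE_empty _
    · obtain ⟨β, hβ, hg⟩ := h a
      exact ordLE_mono (Order.lt_succ_iff.1 hβ) hg
  · exact fun h => Or.inr fun a => ⟨_, Order.lt_succ _, h a⟩

lemma key : ∀ (k : ℕ) (M : Set (Finset ℕ)),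
    OrdLE (Ordinal.omega0 + (k : Ordinal.{0})) M ↔
      ∀ l : List ℕ, l.length = k + 1 → ∃ B : ℕ, ∀ τ ∈ derivs M l, τ.card ≤ B := by
  intro k
  induction k with
  | zero =>
    intro M
    rw [Nat.cast_zero, add_zero, ordLE_unfold]
    constructor
    · rintro (rfl | h) l hl
      · obtain ⟨a, rfl⟩ := List.length_eq_one_iff.1 hl
        refine ⟨0, fun τ hτ => ?_⟩
        rw [derivs_cons, deriv_empty, derivs_nil] at hτ
        exact absurd hτ (Set.notMem_empty τ)
      · obtain ⟨a, rfl⟩ := List.length_eq_one_iff.1 hl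
        obtain ⟨β, hβ, hg⟩ := h a
        obtain ⟨b, rfl⟩ := Ordinal.lt_omega0.1 hβ
        exact ⟨b, fun τ hτ =>
          (ordLE_nat_iff b _ (fun τ hτ => hτ.1)).1 hg τ (by rwa [derivs_cons, derivs_nil] at hτ)⟩
    · intro h
      refine Or.inr fun a => ?_
      obtain ⟨B, hB⟩ := h [a] rfl
      exact ⟨B, Ordinal.nat_lt_omega0 B,
        (ordLE_nat_iff B _ (fun τ hτ => hτ.1)).2 fun τ hτ =>
          hB τ (by rwa [derivs_cons, derivs_nil])⟩
  | succ k ih =>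
    intro M
    rw [ordLE_omega_succ]
    constructor
    · intro h l hl
      match l, hl with
      | a :: l, hl =>
        rw [derivs_cons]
        exact (ih _).1 (h a) l (by simpa using hl)
    · intro h a
      exact (ih _).2 fun l hl => by
        have := h (a :: l) (by simp [hl])
        rwa [derivs_cons] at this

lemma derivs_info : ∀ (l : List ℕ) (M : Set (Finset ℕ)) (τ : Finset ℕ), τ ∈ derivs M l →
    l.Nodup ∧ (∀ x ∈ l, x ∉ τ) ∧ τ ∪ l.toFinset ∈ M := by
  intro l
  induction l with
  | nil =>
    intro M τ h
    exact ⟨List.nodup_nil, by simp, by simpa [derivs_nil] using h⟩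
  | cons a l ih =>
    intro M τ h
    rw [derivs_cons] at h
    obtain ⟨hnd, hnotin, hne, hna, hins⟩ := ih (APC.deriv M a) τ h
    have hat : a ∉ τ := fun h' => hna (Finset.mem_union_left _ h')
    have hal : a ∉ l := fun h' => hna (Finset.mem_union_right _ (List.mem_toFinset.2 h'))
    refine ⟨List.nodup_cons.2 ⟨hal, hnd⟩, ?_, ?_⟩
    · intro x hx
      rcases List.mem_cons.1 hx with rfl | hx
      · exact hat
      · exact hnotin x hx
    · have heq : τ ∪ (a :: l).toFinset = insert a (τ ∪ l.toFinset) := by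
        rw [List.toFinset_cons, Finset.union_insert]
      rwa [heq]

lemma mem_derivs : ∀ (l : List ℕ) (M : Set (Finset ℕ)) (τ : Finset ℕ), l.Nodup →
    (∀ x ∈ l, x ∉ τ) → τ.Nonempty → τ ∪ l.toFinset ∈ M → τ ∈ derivs M l := by
  intro l
  induction l with
  | nil =>
    intro M τ _ _ _ h
    simpa [derivs_nil] using h
  | cons a l ih =>
    intro M τ hnd hnotin hne h
    rw [derivs_cons]
    refine ih (APC.deriv M a) τ (List.nodup_cons.1 hnd).2
      (fun x hx => hnotin x (List.mem_cons_of_mem a hx)) hne ?_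
    refine ⟨⟨hne.choose, Finset.mem_union_left _ hne.choose_spec⟩, ?_, ?_⟩
    · intro hmem
      rcases Finset.mem_union.1 hmem with h' | h'
      · exact hnotin a List.mem_cons_self h'
      · exact (List.nodup_cons.1 hnd).1 (List.mem_toFinset.1 h')
    · have heq : insert a (τ ∪ l.toFinset) = τ ∪ (a :: l).toFinset := by
        rw [List.toFinset_cons, Finset.union_insert]
      rwa [heq]

lemma unifBounded_empty {X : Type*} [MetricSpace X] : UnifBounded (∅ : Set (Set X)) :=
  ⟨1, one_pos, fun U hU => absurd hU (Set.notMem_empty U)⟩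

lemma rdisjoint_empty {X : Type*} [MetricSpace X] (r : ℝ) : RDisjoint r (∅ : Set (Set X)) :=
  fun U hU => absurd hU (Set.notMem_empty U)

lemma rdisjoint_mono {X : Type*} [MetricSpace X] {r s : ℝ} (h : r ≤ s) {𝒰 : Set (Set X)}
    (h𝒰 : RDisjoint s 𝒰) : RDisjoint r 𝒰 :=
  fun U hU V hV hne x hx y hy => h.trans (h𝒰 U hU V hV hne x hx y hy)

lemma mem_le_foldr_max : ∀ (l : List ℕ), ∀ x ∈ l, x ≤ l.foldr max 0 := by
  intro l
  induction l with
  | nil => simp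
  | cons a l ih =>
    intro x hx
    rcases List.mem_cons.1 hx with rfl | hx
    · exact le_max_left _ _
    · exact (ih x hx).trans (le_max_right _ _)

end TrasdimAux

open TrasdimAux

/-- For a metric space `X` with infinite asymptotic dimension and `k ∈ ℕ`,
`trasdim(X) ≤ ω + k` iff for every `n` there is `m(n)` (with `m(n) → ∞` as `n → ∞`) such
that for every `d > 0` there are uniformly bounded families `𝒰₋ₖ, …, 𝒰₀` (each `n`-disjoint)
and `𝒰₁, …, 𝒰_{m(n)}` (each `d`-disjoint) which together cover `X`. -/
theorem trasdim_le_omega_add_iff {X : Type*} [MetricSpace X]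
    (hinf : ∀ n : ℕ, ¬ AsdimLE X n) (k : ℕ) :
    TrasdimLE X (Ordinal.omega0 + (k : Ordinal.{0})) ↔
      ∃ m : ℕ → ℕ, Filter.Tendsto m Filter.atTop Filter.atTop ∧
        ∀ n : ℕ, ∀ d : ℝ, 0 < d →
          ∃ (𝒰 : Fin (k + 1) → Set (Set X)) (𝒱 : Fin (m n) → Set (Set X)),
            (∀ i, UnifBounded (𝒰 i)) ∧ (∀ j, UnifBounded (𝒱 j)) ∧
            (∀ i, RDisjoint (n : ℝ) (𝒰 i)) ∧ (∀ j, RDisjoint d (𝒱 j)) ∧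
            ((⋃ i, ⋃₀ 𝒰 i) ∪ (⋃ j, ⋃₀ 𝒱 j)) = Set.univ := by
  rw [TrasdimLE, key k (AClass X)]
  constructor
  · -- from bounds on iterated derivatives to covers
    intro h
    have hB : ∀ n : ℕ, ∃ B : ℕ,
        ∀ τ ∈ derivs (AClass X) ((List.range (k + 1)).map (n + ·)), τ.card ≤ B :=
      fun n => h _ (by simp)
    choose B hB using hB
    refine ⟨fun n => max (n + 1) (B n + 1), ?_, ?_⟩
    · exact Filter.tendsto_atTop_mono
        (fun n => le_trans (Nat.le_succ n) (le_max_left _ _)) Filter.tendsto_id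
    · intro n d hd
      set L : List ℕ := (List.range (k + 1)).map (n + ·) with hL
      set D : ℕ := max (n + k + 1) ⌈d⌉₊ with hDdef
      set τ₀ : Finset ℕ := (Finset.range (B n + 1)).image (fun j => D + j) with hτ₀
      have hcard : τ₀.card = B n + 1 := by
        rw [hτ₀, Finset.card_image_of_injective _ (add_right_injective D), Finset.card_range]
      have hτmem : ∀ x ∈ τ₀, D ≤ x := by
        intro x hx
        simp only [hτ₀, Finset.mem_image, Finset.mem_range] at hx
        obtain ⟨j, -, rfl⟩ := hx
        exact Nat.le_add_right D j
      have hLmem : ∀ x ∈ L, x ≤ n + k := by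
        intro x hx
        simp only [hL, List.mem_map, List.mem_range] at hx
        obtain ⟨j, hj, rfl⟩ := hx
        omega
      have hDτ : D ∈ τ₀ := by
        simp only [hτ₀, Finset.mem_image, Finset.mem_range]
        exact ⟨0, by omega, by omega⟩
      have hσ : τ₀ ∪ L.toFinset ∉ AClass X := by
        intro hmem
        have ht : τ₀ ∈ derivs (AClass X) L := by
          refine mem_derivs L _ _ ?_ ?_ ⟨D, hDτ⟩ hmem
          · exact List.nodup_range.map (add_right_injective n)
          · intro x hx hxt
            have h1 := hτmem _ hxt
            have h2 := hLmem _ hx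
            omega
        have := hB n τ₀ ht
        omega
      have hcov : ∃ 𝒰 : ℕ → Set (Set X),
          (∀ i ∈ τ₀ ∪ L.toFinset, UnifBounded (𝒰 i)) ∧
          (∀ i ∈ τ₀ ∪ L.toFinset, RDisjoint (i : ℝ) (𝒰 i)) ∧
          (⋃ i ∈ (τ₀ ∪ L.toFinset), ⋃₀ 𝒰 i) = Set.univ := by
        by_contra hcontra
        exact hσ ⟨⟨D, Finset.mem_union_left _ hDτ⟩, hcontra⟩
      obtain ⟨𝒰, hUB, hRD, hcov⟩ := hcov
      have hLto : ∀ i : Fin (k + 1), n + (i : ℕ) ∈ τ₀ ∪ L.toFinset := by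
        intro i
        refine Finset.mem_union_right _ (List.mem_toFinset.2 ?_)
        simp only [hL, List.mem_map, List.mem_range]
        exact ⟨i, i.isLt, rfl⟩
      have hτto : ∀ j : ℕ, j < B n + 1 → D + j ∈ τ₀ ∪ L.toFinset := by
        intro j hj
        refine Finset.mem_union_left _ ?_
        simp only [hτ₀, Finset.mem_image, Finset.mem_range]
        exact ⟨j, hj, rfl⟩
      refine ⟨fun i => 𝒰 (n + i),
        fun j => if hj : (j : ℕ) < B n + 1 then 𝒰 (D + j) else ∅, ?_, ?_, ?_, ?_, ?_⟩
      · intro i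
        exact hUB _ (hLto i)
      · intro j
        by_cases hj : (j : ℕ) < B n + 1
        · simp only [dif_pos hj]
          exact hUB _ (hτto _ hj)
        · simp only [dif_neg hj]
          exact unifBounded_empty
      · intro i
        refine rdisjoint_mono ?_ (hRD _ (hLto i))
        exact_mod_cast Nat.le_add_right n (i : ℕ)
      · intro j
        by_cases hj : (j : ℕ) < B n + 1
        · simp only [dif_pos hj]
          refine rdisjoint_mono ?_ (hRD _ (hτto _ hj))
          calc d ≤ (⌈d⌉₊ : ℝ) := Nat.le_ceil d
            _ ≤ ((D + (j : ℕ) : ℕ) : ℝ) := by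
                have : ⌈d⌉₊ ≤ D + (j : ℕ) := le_trans (le_max_right _ _) (Nat.le_add_right _ _)
                exact_mod_cast this
        · simp only [dif_neg hj]
          exact rdisjoint_empty d
      · apply Set.eq_univ_of_univ_subset
        intro x hx
        rw [← hcov] at hx
        simp only [Set.mem_iUnion] at hx
        obtain ⟨i, hi, hxU⟩ := hx
        rcases Finset.mem_union.1 hi with hi | hi
        · -- i ∈ τ₀
          simp only [hτ₀, Finset.mem_image, Finset.mem_range] at hi
          obtain ⟨j, hj, rfl⟩ := hi
          have hjm : j < max (n + 1) (B n + 1) := lt_of_lt_of_le hj (le_max_right _ _)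
          refine Set.mem_union_right _ (Set.mem_iUnion.2 ⟨⟨j, hjm⟩, ?_⟩)
          simp only [dif_pos (show ((⟨j, hjm⟩ : Fin _) : ℕ) < B n + 1 from hj)]
          exact hxU
        · -- i ∈ L.toFinset
          rw [List.mem_toFinset] at hi
          simp only [hL, List.mem_map, List.mem_range] at hi
          obtain ⟨c, hc, rfl⟩ := hi
          exact Set.mem_union_left _ (Set.mem_iUnion.2 ⟨⟨c, hc⟩, hxU⟩)
  · -- from covers to bounds on iterated derivatives
    rintro ⟨m, -, hm⟩ l hl
    by_cases hnd : l.Nodup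
    · set n : ℕ := l.foldr max 0 with hn
      refine ⟨m n, fun τ hτ => ?_⟩
      by_contra hc
      push_neg at hc
      obtain ⟨-, hdisj, hσA⟩ := derivs_info l _ τ hτ
      set σ : Finset ℕ := τ ∪ l.toFinset with hσdef
      set dR : ℝ := ((σ.sup id : ℕ) : ℝ) + 1 with hdR
      have hdRpos : 0 < dR := by positivity
      obtain ⟨𝒰, 𝒱, hUB𝒰, hUB𝒱, hRD𝒰, hRD𝒱, hcov⟩ := hm n dR hdRpos
      obtain ⟨τ', hτ'sub, hτ'card⟩ := Finset.exists_subset_card_eq (le_of_lt hc)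
      have hlcard : l.toFinset.card = k + 1 := by
        rw [List.toFinset_card_of_nodup hnd, hl]
      set e := l.toFinset.orderIsoOfFin hlcard with he
      set f := τ'.orderIsoOfFin hτ'card with hf
      classical
      set 𝒲 : ℕ → Set (Set X) := fun i =>
        if h1 : i ∈ l.toFinset then 𝒰 (e.symm ⟨i, h1⟩)
        else if h2 : i ∈ τ' then 𝒱 (f.symm ⟨i, h2⟩) else ∅ with h𝒲
      refine hσA.2 ⟨𝒲, ?_, ?_, ?_⟩
      · intro i hi
        by_cases h1 : i ∈ l.toFinset
        · simp only [h𝒲]; rw [dif_pos h1]; exact hUB𝒰 _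
        · by_cases h2 : i ∈ τ'
          · simp only [h𝒲]; rw [dif_neg h1, dif_pos h2]; exact hUB𝒱 _
          · simp only [h𝒲]; rw [dif_neg h1, dif_neg h2]; exact unifBounded_empty
      · intro i hi
        by_cases h1 : i ∈ l.toFinset
        · simp only [h𝒲]; rw [dif_pos h1]
          refine rdisjoint_mono ?_ (hRD𝒰 _)
          have : i ≤ n := mem_le_foldr_max l i (List.mem_toFinset.1 h1)
          exact_mod_cast this
        · by_cases h2 : i ∈ τ'
          · simp only [h𝒲]; rw [dif_neg h1, dif_pos h2]
            refine rdisjoint_mono ?_ (hRD𝒱 _)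
            have hiσ : i ∈ σ := Finset.mem_union_left _ (hτ'sub h2)
            have h3 : i ≤ σ.sup id := Finset.le_sup (f := id) hiσ
            rw [hdR]
            have : (i : ℝ) ≤ ((σ.sup id : ℕ) : ℝ) := by exact_mod_cast h3
            linarith
          · simp only [h𝒲]; rw [dif_neg h1, dif_neg h2]
            exact rdisjoint_empty _
      · apply Set.eq_univ_of_univ_subset
        intro x hx
        rw [← hcov] at hx
        rcases hx with hx | hx
        · simp only [Set.mem_iUnion] at hx
          obtain ⟨j, hxU⟩ := hx
          have hmem : ((e j : ℕ)) ∈ σ :=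
            Finset.mem_union_right _ (e j).2
          refine Set.mem_biUnion hmem ?_
          simp only [h𝒲]
          rw [dif_pos (e j).2]
          have : (⟨(e j : ℕ), (e j).2⟩ : {x // x ∈ l.toFinset}) = e j := Subtype.ext rfl
          rw [this, OrderIso.symm_apply_apply]
          exact hxU
        · simp only [Set.mem_iUnion] at hx
          obtain ⟨j, hxU⟩ := hx
          have hτm : ((f j : ℕ)) ∈ τ := hτ'sub (f j).2
          have hmem : ((f j : ℕ)) ∈ σ := Finset.mem_union_left _ hτm
          have h1 : (f j : ℕ) ∉ l.toFinset := fun h' =>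
            hdisj _ (List.mem_toFinset.1 h') hτm
          refine Set.mem_biUnion hmem ?_
          simp only [h𝒲]
          rw [dif_neg h1, dif_pos (f j).2]
          have : (⟨(f j : ℕ), (f j).2⟩ : {x // x ∈ τ'}) = f j := Subtype.ext rfl
          rw [this, OrderIso.symm_apply_apply]
          exact hxU

    · exact ⟨0, fun τ hτ => absurd (derivs_info l _ τ hτ).1 hnd⟩
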